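/- Let a, b ∈ F_{q^2}^*, A, B, C in an algebraic closure with B = −(a^q+bA)/b and C = a^{1-q}. Suppose F_{a,b}(X,Y) = −b(XY+AX+BY+C)(XY+BX+AY+C). Then a^2 b − a^{2q} b^q = 0 and b(a^{q+1} − a^q A − b^{q+1} − bA^2) = 0; consequently b = v/a^2 for some v ∈ F_q^* and v^4 (a^{q+1}+3v)^2 (a^{3q+3} + a^{q+1}v − v^2) = 0. -/

import Mathlib

lemma cubic_zero {R : Type*} [CommRing R] [IsDomain R] [Infinite R] (c0 c1 c2 c3 : R)
    (h : ∀ x : R, c3 * x ^ 3 + c2 * x ^ 2 + c1 * x + c0 = 0) :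
    c0 = 0 ∧ c1 = 0 ∧ c2 = 0 ∧ c3 = 0 := by
  have hp : (Polynomial.C c3 * Polynomial.X ^ 3 + Polynomial.C c2 * Polynomial.X ^ 2 +
      Polynomial.C c1 * Polynomial.X + Polynomial.C c0 : Polynomial R) = 0 := by
    apply Polynomial.funext
    intro r
    simpa using h r
  refine ⟨?_, ?_, ?_, ?_⟩
  · simpa using congrArg (Polynomial.coeff · 0) hp
  · simpa using congrArg (Polynomial.coeff · 1) hp
  · simpa using congrArg (Polynomial.coeff · 2) hp
  · simpa using congrArg (Polynomial.coeff · 3) hp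

theorem stmt_18 (p h q : ℕ) (hp : p.Prime) (hh : 1 ≤ h) (hq : q = p ^ h)
    (F : Type*) [Field F] [Fintype F] [CharP F p]
    (hcard : Fintype.card F = q ^ 2)
    (a b : F) (ha : a ≠ 0) (hb : b ≠ 0)
    (A B C : AlgebraicClosure F)
    (i : F →+* AlgebraicClosure F) (hi : i = algebraMap F (AlgebraicClosure F))
    (hB : B = -(i a ^ q + i b * A) / i b)
    (hC : C = i a / i a ^ q)
    (hfact : ∀ X Y : AlgebraicClosure F,
      (i a ^ q * X ^ 3 + X ^ 2 + i b ^ q) * (i b * Y ^ 3 + Y + i a) -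
          (i a ^ q * Y ^ 3 + Y ^ 2 + i b ^ q) * (i b * X ^ 3 + X + i a) =
        (X - Y) * (-(i b) * (X * Y + A * X + B * Y + C) * (X * Y + B * X + A * Y + C))) :
    a ^ 2 * b - a ^ (2 * q) * b ^ q = 0 ∧
      i b * (i a ^ (q + 1) - i a ^ q * A - i b ^ (q + 1) - i b * A ^ 2) = 0 ∧
      ∃ v : F, v ^ q = v ∧ v ≠ 0 ∧ b = v / a ^ 2 ∧
        v ^ 4 * (a ^ (q + 1) + 3 * v) ^ 2 *
          (a ^ (3 * q + 3) + a ^ (q + 1) * v - v ^ 2) = 0 := by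
  have hb' : i b ≠ 0 := by simp [hi, hb]
  have ha' : i a ≠ 0 := by simp [hi, ha]
  have haq' : i a ^ q ≠ 0 := pow_ne_zero _ ha'
  have main : ∀ y x : AlgebraicClosure F,
      ((i b * A * B - i b * i b ^ q + i a * i a ^ q) + (i b * B + i b * A + i a ^ q) * y) * x ^ 3 +
      ((i b * B * C + i b * A * C + i a) + (1 + 2 * i b * C + i b * B ^ 2 - i b * A * B + i b * A ^ 2) * y) * x ^ 2 +
      ((- i b ^ q + i b * C ^ 2) + (-1 - 2 * i b * C - i b * B ^ 2 + i b * A * B - i b * A ^ 2) * y ^ 2 + (- (i b * B) - i b * A - i a ^ q) * y ^ 3) * x +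
      ((i b ^ q - i b * C ^ 2) * y + (- (i b * B * C) - i b * A * C - i a) * y ^ 2 + (- (i b * A * B) + i b * i b ^ q - i a * i a ^ q) * y ^ 3) = 0 := by
    intro y x
    linear_combination hfact x y
  have hc1 : ∀ y : AlgebraicClosure F,
      (- (i b * B) - i b * A - i a ^ q) * y ^ 3 +
      (-1 - 2 * i b * C - i b * B ^ 2 + i b * A * B - i b * A ^ 2) * y ^ 2 +
      (0 : AlgebraicClosure F) * y + (i b * C ^ 2 - i b ^ q) = 0 := by
    intro y
    have := (cubic_zero _ _ _ _ (main y)).2.1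
    linear_combination this
  obtain ⟨hd0, -, hd2, -⟩ := cubic_zero _ _ _ _ hc1
  have hE1 : i b * A * B - i b * i b ^ q + i a * i a ^ q = 0 := by
    have := (cubic_zero _ _ _ _ (main 0)).2.2.2
    linear_combination this
  have hA2 : i b * A ^ 2 + i a ^ q * A + i b * i b ^ q - i a * i a ^ q = 0 := by
    have h2 : i b * (i b * A ^ 2 + i a ^ q * A + i b * i b ^ q - i a * i a ^ q) = 0 := by
      rw [hB] at hE1
      field_simp at hE1
      linear_combination -(i b) * hE1
    exact (mul_eq_zero.mp h2).resolve_left hb'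
  have hR1R : i a ^ 2 * i b - (i a ^ q) ^ 2 * i b ^ q = 0 := by
    rw [hC] at hd0
    field_simp at hd0
    linear_combination hd0
  have hE5R : i a ^ q * i b + 2 * i a * i b ^ 2 + (i a ^ q) ^ 3 + 3 * i a * (i a ^ q) ^ 2 * i b
      - 3 * i a ^ q * i b ^ 2 * i b ^ q = 0 := by
    have h2 : i b ^ 2 * (i a ^ q * i b + 2 * i a * i b ^ 2 + (i a ^ q) ^ 3 +
        3 * i a * (i a ^ q) ^ 2 * i b - 3 * i a ^ q * i b ^ 2 * i b ^ q) = 0 := by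
      rw [hB, hC] at hd2
      field_simp at hd2
      linear_combination -(i b) ^ 2 * hd2 - 3 * i a ^ q * i b ^ 3 * hA2
    exact (mul_eq_zero.mp h2).resolve_left (pow_ne_zero _ hb')
  have goal1 : a ^ 2 * b - a ^ (2 * q) * b ^ q = 0 := by
    apply i.injective
    rw [map_zero, map_sub, map_mul, map_mul, map_pow, map_pow, map_pow]
    linear_combination hR1R
  have goal2 : i b * (i a ^ (q + 1) - i a ^ q * A - i b ^ (q + 1) - i b * A ^ 2) = 0 := by
    linear_combination (-(i b)) * hA2
  have hE5F : a ^ q * b + 2 * a * b ^ 2 + (a ^ q) ^ 3 + 3 * a * (a ^ q) ^ 2 * b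
      - 3 * a ^ q * b ^ 2 * b ^ q = 0 := by
    apply i.injective
    simp only [map_add, map_sub, map_mul, map_pow, map_ofNat, map_zero]
    linear_combination hE5R
  refine ⟨goal1, goal2, a ^ 2 * b, ?_, mul_ne_zero (pow_ne_zero _ ha) hb, ?_, ?_⟩
  · rw [mul_pow, ← pow_mul]
    linear_combination -goal1
  · field_simp
  · linear_combination
      ((a ^ 2 * b) ^ 4 * (a ^ (q + 1) + 3 * (a ^ 2 * b)) * a ^ 4 * a ^ q) * hE5F -
      (3 * (a ^ 2 * b) ^ 4 * (a ^ (q + 1) + 3 * (a ^ 2 * b)) * a ^ 4 * b ^ 2) * goal1
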